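/- In the group K = ⟨x, y, a, b : a² = b² = e, ab = ba, yay⁻¹ = a, yby⁻¹ = ab, xyx⁻¹ = y²⟩, the element a is trivial in every homomorphism from K to a finite group. -/

import Mathlib

namespace Stmt12

/-- Generators: 0 = x, 1 = y, 2 = a, 3 = b. -/
def X : FreeGroup (Fin 4) := FreeGroup.of 0
def Y : FreeGroup (Fin 4) := FreeGroup.of 1
def A : FreeGroup (Fin 4) := FreeGroup.of 2
def B : FreeGroup (Fin 4) := FreeGroup.of 3

/-- Relators of K = ⟨x,y,a,b : a²=b²=e, ab=ba, yay⁻¹=a, yby⁻¹=ab, xyx⁻¹=y²⟩. -/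
def rels : Set (FreeGroup (Fin 4)) :=
  {A ^ 2, B ^ 2, A * B * A⁻¹ * B⁻¹, Y * A * Y⁻¹ * A⁻¹,
    Y * B * Y⁻¹ * (A * B)⁻¹, X * Y * X⁻¹ * (Y ^ 2)⁻¹}

end Stmt12

theorem stmt_12 (H : Type*) [Group H] [Finite H]
    (φ : PresentedGroup Stmt12.rels →* H) :
    φ (PresentedGroup.of 2) = 1 := by
  set ψ : FreeGroup (Fin 4) →* H :=
    φ.comp (QuotientGroup.mk' (Subgroup.normalClosure Stmt12.rels)) with hψ
  have key : ∀ r ∈ Stmt12.rels, ψ r = 1 := by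
    intro r hr
    have : (QuotientGroup.mk' (Subgroup.normalClosure Stmt12.rels)) r = 1 := by
      rw [QuotientGroup.mk'_apply, QuotientGroup.eq_one_iff]
      exact Subgroup.subset_normalClosure hr
    show φ ((QuotientGroup.mk' (Subgroup.normalClosure Stmt12.rels)) r) = 1
    rw [this]
    exact φ.map_one
  set x := ψ (FreeGroup.of 0) with hx
  set y := ψ (FreeGroup.of 1) with hy
  set a := ψ (FreeGroup.of 2) with ha
  set b := ψ (FreeGroup.of 3) with hb
  have goal_eq : φ (PresentedGroup.of 2) = a := rfl
  rw [goal_eq]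
  have r1 : a ^ 2 = 1 := by
    have := key _ (by simp [Stmt12.rels] : Stmt12.A ^ 2 ∈ Stmt12.rels)
    simpa [Stmt12.A, ha] using this
  have r3 : a * b * a⁻¹ * b⁻¹ = 1 := by
    have := key _ (by simp [Stmt12.rels] :
      Stmt12.A * Stmt12.B * Stmt12.A⁻¹ * Stmt12.B⁻¹ ∈ Stmt12.rels)
    simpa [Stmt12.A, Stmt12.B, ha, hb] using this
  have r4 : y * a * y⁻¹ = a := by
    have := key _ (by simp [Stmt12.rels] :
      Stmt12.Y * Stmt12.A * Stmt12.Y⁻¹ * Stmt12.A⁻¹ ∈ Stmt12.rels)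
    have h : y * a * y⁻¹ * a⁻¹ = 1 := by
      simpa [Stmt12.Y, Stmt12.A, hy, ha] using this
    exact mul_inv_eq_one.mp h
  have r5 : y * b * y⁻¹ = a * b := by
    have := key _ (by simp [Stmt12.rels] :
      Stmt12.Y * Stmt12.B * Stmt12.Y⁻¹ * (Stmt12.A * Stmt12.B)⁻¹ ∈ Stmt12.rels)
    have h : y * b * y⁻¹ * (a * b)⁻¹ = 1 := by
      simpa [Stmt12.Y, Stmt12.B, Stmt12.A, hy, hb, ha] using this
    exact mul_inv_eq_one.mp h
  have r6 : x * y * x⁻¹ = y ^ 2 := by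
    have := key _ (by simp [Stmt12.rels] :
      Stmt12.X * Stmt12.Y * Stmt12.X⁻¹ * (Stmt12.Y ^ 2)⁻¹ ∈ Stmt12.rels)
    have h : x * y * x⁻¹ * (y ^ 2)⁻¹ = 1 := by
      simpa [Stmt12.X, Stmt12.Y, hx, hy] using this
    exact mul_inv_eq_one.mp h
  -- x^m y x^{-m} = y^(2^m)
  have conjx : ∀ m : ℕ, x ^ m * y * (x ^ m)⁻¹ = y ^ (2 ^ m) := by
    intro m
    induction m with
    | zero => simp
    | succ m ih =>
      have : x ^ (m + 1) * y * (x ^ (m + 1))⁻¹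
          = x * (x ^ m * y * (x ^ m)⁻¹) * x⁻¹ := by group
      rw [this, ih, ← conj_pow, r6, ← pow_mul, pow_succ, Nat.mul_comm]
  -- y has odd order
  have hxk : x ^ orderOf x = 1 := pow_orderOf_eq_one x
  have hk : 0 < orderOf x := orderOf_pos x
  have hyfix : y = y ^ (2 ^ orderOf x) := by
    have := conjx (orderOf x)
    rw [hxk] at this
    simpa using this
  have hy1 : y ^ (2 ^ orderOf x - 1) = 1 := by
    have h2 : (1:ℕ) ≤ 2 ^ orderOf x := Nat.one_le_two_pow
    have : y ^ (2 ^ orderOf x - 1) * y = y := by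
      rw [← pow_succ, Nat.sub_add_cancel h2, ← hyfix]
    exact mul_right_cancel (by rw [this, one_mul])
  have hodd : Odd (2 ^ orderOf x - 1) := by
    have : Even (2 ^ orderOf x) := by
      rcases Nat.exists_eq_succ_of_ne_zero hk.ne' with ⟨m, hm⟩
      rw [hm, pow_succ]
      exact Even.mul_left even_two _
    exact Nat.Even.sub_odd Nat.one_le_two_pow this odd_one
  set n := orderOf y with hn
  have hdvd : n ∣ 2 ^ orderOf x - 1 := orderOf_dvd_of_pow_eq_one hy1
  have hnodd : Odd n := by
    rw [Nat.odd_iff]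
    rcases Nat.even_or_odd n with he | ho
    · exfalso
      have : (2:ℕ) ∣ 2 ^ orderOf x - 1 := (even_iff_two_dvd.mp he).trans hdvd
      rw [Nat.odd_iff] at hodd
      omega
    · exact Nat.odd_iff.mp ho
  -- y^m b y^{-m} = a^m b
  have hcomm : a * b = b * a := by
    have h := r3
    group at h
    -- a * b * a⁻¹ * b⁻¹ = 1 → a * b = b * a
    calc a * b = (a * b * a⁻¹ * b⁻¹) * (b * a) := by group
    _ = b * a := by rw [r3]; group
  have conjy : ∀ m : ℕ, y ^ m * b * (y ^ m)⁻¹ = a ^ m * b := by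
    intro m
    induction m with
    | zero => simp
    | succ m ih =>
      have h1 : y ^ (m + 1) * b * (y ^ (m + 1))⁻¹
          = y * (y ^ m * b * (y ^ m)⁻¹) * y⁻¹ := by group
      have h2 : y * a ^ m * y⁻¹ = a ^ m := by rw [← conj_pow, r4]
      calc y ^ (m + 1) * b * (y ^ (m + 1))⁻¹
          = y * (a ^ m * b) * y⁻¹ := by rw [h1, ih]
        _ = (y * a ^ m * y⁻¹) * (y * b * y⁻¹) := by group
        _ = a ^ m * (a * b) := by rw [h2, r5]
        _ = a ^ (m + 1) * b := by rw [pow_succ, mul_assoc]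
  have han : a ^ n = 1 := by
    have := conjy n
    rw [pow_orderOf_eq_one] at this
    simp at this
    exact this
  rcases hnodd with ⟨m, hm⟩
  have : a ^ n = a := by
    rw [hm, pow_add, pow_mul, r1, one_pow, one_mul, pow_one]
  rw [← this, han]
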